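/- Let G be a finitely generated group which admits a nonempty G-SFT X with m(X) > 0_M. Then the domino problem of G is undecidable: there is no algorithm which, given a finite set of pattern codings, decides whether the G-SFT they define is nonempty. -/

import Mathlib

namespace MedvedevFormal

/-! ### Medvedev reducibility on Baire space -/

/-- The finite prefix of length `k` of a point of Baire space, as a list. -/
def pref (x : ℕ → ℕ) (k : ℕ) : List ℕ := (List.range k).map x

/-- Medvedev reducibility `m(P) ≤ m(Q)` between subsets of Baire space: some computable
monotone prefix-functional (i.e. a partial computable type-two functional), defined on all
of `Q`, maps every element of `Q` to an element of `P`. -/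
def BaireLE (P Q : Set (ℕ → ℕ)) : Prop :=
  ∃ φ : List ℕ → List ℕ, Computable φ ∧
    (∀ l₁ l₂ : List ℕ, l₁ <+: l₂ → φ l₁ <+: φ l₂) ∧
    ∀ x ∈ Q, ∃ y ∈ P, ∀ n : ℕ, ∃ k : ℕ, (φ (pref x k))[n]? = some (y n)

/-- Medvedev equivalence: `m(P) = m(Q)`. -/
def BaireEquiv (P Q : Set (ℕ → ℕ)) : Prop := BaireLE P Q ∧ BaireLE Q P

/-- A canonical representative of the join `m(P) ∨ m(Q)`. -/
def joinSet (P Q : Set (ℕ → ℕ)) : Set (ℕ → ℕ) :=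
  {x | (fun n => x (2 * n)) ∈ P ∧ (fun n => x (2 * n + 1)) ∈ Q}

/-- A canonical representative of the meet `m(P) ∧ m(Q)`. -/
def meetSet (P Q : Set (ℕ → ℕ)) : Set (ℕ → ℕ) :=
  {x | (x 0 = 0 ∧ (fun n => x (n + 1)) ∈ P) ∨ (x 0 = 1 ∧ (fun n => x (n + 1)) ∈ Q)}

/-- `P` has the zero Medvedev degree `0_M`: it contains a computable point. -/
def IsZeroDeg (P : Set (ℕ → ℕ)) : Prop := ∃ y ∈ P, Computable y

/-- The cylinder of a finite word in Baire space. -/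
def cylinder (l : List ℕ) : Set (ℕ → ℕ) :=
  {x | ∀ (i : ℕ) (h : i < l.length), x i = l[i]}

/-- Cantor space `{0,1}^ℕ` inside Baire space. -/
def cantorSpace : Set (ℕ → ℕ) := {x | ∀ n, x n ≤ 1}

/-- `P` is an effectively closed (`Π⁰₁`) subset of Cantor space: its complement within
Cantor space is the union of the cylinders of a computably enumerable sequence of words. -/
def IsPi01Cantor (P : Set (ℕ → ℕ)) : Prop :=
  ∃ f : ℕ → List ℕ, Computable f ∧ P = cantorSpace \ ⋃ n, cylinder (f n)

/-- The Medvedev degree of `P` is a `Π⁰₁` Medvedev degree. -/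
def IsPi01Deg (P : Set (ℕ → ℕ)) : Prop :=
  ∃ Q, IsPi01Cantor Q ∧ Q.Nonempty ∧ BaireEquiv P Q

/-- `P` realizes the maximal `Π⁰₁` Medvedev degree (the degree of the class of complete
consistent extensions of Peano arithmetic): it is a nonempty `Π⁰₁` subset of Cantor space
to which every nonempty `Π⁰₁` subset of Cantor space is Medvedev reducible. -/
def IsMaxPi01 (P : Set (ℕ → ℕ)) : Prop :=
  IsPi01Cantor P ∧ P.Nonempty ∧ ∀ Q, IsPi01Cantor Q → Q.Nonempty → BaireLE Q P

/-! ### Encoding of configuration spaces -/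

/-- The canonical encoding of a configuration `x : α → A` as a point of Baire space. -/
def confFun {α A : Type*} [Encodable α] [Encodable A] (x : α → A) : ℕ → ℕ :=
  fun n => Encodable.encode ((Encodable.decode (α := α) n).map x)

/-- The image of a set of configurations in Baire space, used to measure its
Medvedev degree. -/
def mSet {α A : Type*} [Encodable α] [Encodable A] (X : Set (α → A)) : Set (ℕ → ℕ) :=
  confFun '' X

/-- A configuration is computable if its Baire-space encoding is computable. -/
def ComputablePoint {α A : Type*} [Encodable α] [Encodable A] (x : α → A) : Prop :=
  Computable (confFun x)

/-- `m(X) ≤ m(Y)` for sets of configurations. -/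
def MedLE {α A β B : Type*} [Encodable α] [Encodable A] [Encodable β] [Encodable B]
    (X : Set (α → A)) (Y : Set (β → B)) : Prop :=
  BaireLE (mSet X) (mSet Y)

/-- `m(X) = m(Y)` for sets of configurations. -/
def MedEquiv {α A β B : Type*} [Encodable α] [Encodable A] [Encodable β] [Encodable B]
    (X : Set (α → A)) (Y : Set (β → B)) : Prop :=
  MedLE X Y ∧ MedLE Y X

/-! ### Subshifts -/

/-- The left shift action: `(g • x) h = x (g⁻¹ h)`. -/
def shift {G A : Type*} [Group G] (g : G) (x : G → A) : G → A := fun h => x (g⁻¹ * h)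

/-- The prodiscrete topology on `A^G`. -/
def prodiscrete (G A : Type*) : TopologicalSpace (G → A) :=
  @Pi.topologicalSpace G (fun _ => A) fun _ => ⊥

/-- A subshift: a shift-invariant subset of `A^G`, closed in the prodiscrete topology. -/
def IsSubshift {G A : Type*} [Group G] (X : Set (G → A)) : Prop :=
  (∀ x ∈ X, ∀ g : G, shift g x ∈ X) ∧ @IsClosed (G → A) (prodiscrete G A) X

/-- A pattern: a map `p : D → A` with `D ⊆ G` finite. -/
structure Pattern (G A : Type*) where
  dom : Finset G
  val : {g // g ∈ dom} → A

/-- The translate `g • x` agrees with the pattern `p` on its domain. -/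
def MatchesAt {G A : Type*} [Group G] (p : Pattern G A) (g : G) (x : G → A) : Prop :=
  ∀ h : {g' // g' ∈ p.dom}, shift g x h = p.val h

/-- A subshift of finite type: defined by a finite list of forbidden patterns. -/
def IsSFT {G A : Type*} [Group G] (X : Set (G → A)) : Prop :=
  ∃ F : List (Pattern G A), X = {x | ∀ p ∈ F, ∀ g : G, ¬MatchesAt p g x}

/-- A morphism between subshifts: a continuous shift-equivariant map from `X` to `Y`. -/
def IsMorphism {G A B : Type*} [Group G] (X : Set (G → A)) (Y : Set (G → B))
    (φ : (G → A) → (G → B)) : Prop :=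
  Set.MapsTo φ X Y ∧
    @ContinuousOn (G → A) (G → B) (prodiscrete G A) (prodiscrete G B) φ X ∧
    ∀ x ∈ X, ∀ g : G, φ (shift g x) = shift g (φ x)

/-- A sofic subshift: the image of an SFT (on some finite alphabet) under a topological
factor map. -/
def IsSofic {G A : Type*} [Group G] (X : Set (G → A)) : Prop :=
  ∃ (B : Type) (_ : Finite B) (Y : Set (G → B)) (φ : (G → B) → (G → A)),
    IsSFT Y ∧ IsMorphism Y X φ ∧ φ '' Y = X

/-! ### Finitely generated groups, covers and pullbacks -/

/-- `σ` enumerates a finite symmetric generating set of `G`. -/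
def IsSymmGen {G : Type*} [Group G] {k : ℕ} (σ : Fin k → G) : Prop :=
  Subgroup.closure (Set.range σ) = ⊤ ∧ ∀ i, (σ i)⁻¹ ∈ Set.range σ

/-- The canonical encoding of a free group via reduced words. -/
instance freeGroupEncodable {α : Type*} [DecidableEq α] [Encodable α] :
    Encodable (FreeGroup α) :=
  Encodable.ofLeftInjection FreeGroup.toWord (fun l => some (FreeGroup.mk l))
    fun _ => congrArg some FreeGroup.mk_toWord

/-- The canonical homomorphism from the free group determined by `σ`. -/
def cover {G : Type*} [Group G] {k : ℕ} (σ : Fin k → G) : FreeGroup (Fin k) →* G :=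
  FreeGroup.lift σ

/-- The pullback of a subshift along a group homomorphism. -/
def pullback {K G A : Type*} [Group K] [Group G] (ρ : K →* G) (X : Set (G → A)) :
    Set (K → A) :=
  (fun x => x ∘ ρ) '' X

/-- The group element represented by a word over the generators. -/
def wordVal {G : Type*} [Group G] {k : ℕ} (σ : Fin k → G) (w : List (Fin k × Bool)) : G :=
  cover σ (FreeGroup.mk w)

/-- `G` is recursively presented w.r.t. `σ`: its word problem is recursively enumerable. -/
def RecursivelyPresented {G : Type*} [Group G] {k : ℕ} (σ : Fin k → G) : Prop :=
  ∃ f : ℕ → Option (List (Fin k × Bool)), Computable f ∧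
    ∀ w : List (Fin k × Bool), (wordVal σ w = 1 ↔ ∃ n, f n = some w)

/-- The membership problem of the subgroup `H` in `G` is decidable w.r.t. `σ`. -/
def DecidableMembership {G : Type*} [Group G] {k : ℕ} (σ : Fin k → G)
    (H : Subgroup G) : Prop :=
  ∃ φ : List (Fin k × Bool) → Bool, Computable φ ∧
    ∀ w : List (Fin k × Bool), (φ w = true ↔ wordVal σ w ∈ H)

/-- `G` has decidable word problem w.r.t. `σ`. -/
def DecidableWordProblem {G : Type*} [Group G] {k : ℕ} (σ : Fin k → G) : Prop :=
  ∃ φ : List (Fin k × Bool) → Bool, Computable φ ∧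
    ∀ w : List (Fin k × Bool), (φ w = true ↔ wordVal σ w = 1)

/-- The set of configurations on the free group matching a coded pattern: a pattern is
coded as a list of pairs (code of a group element, code of a letter). -/
def codedCylinder {k : ℕ} {A : Type*} [Encodable A] (p : List (ℕ × ℕ)) :
    Set (FreeGroup (Fin k) → A) :=
  {x | ∀ q ∈ p, ∀ g : FreeGroup (Fin k),
    Encodable.encode g = q.1 → Encodable.encode (x g) = q.2}

/-- `X` is an effective subshift: the complement of its pullback to the free group is the
union of the cylinders of a computably enumerable sequence of finitely supported patterns. -/
def IsEffective {G : Type*} [Group G] {k : ℕ} (σ : Fin k → G) {A : Type*} [Encodable A]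
    (X : Set (G → A)) : Prop :=
  ∃ f : ℕ → List (ℕ × ℕ), Computable f ∧
    (pullback (cover σ) X)ᶜ = ⋃ n, codedCylinder (f n)

/-! ### Degree spectra -/

/-- The Medvedev degree of `P` belongs to `M_SFT(G)`: some nonempty `G`-SFT has the
Medvedev degree of `P`. -/
def IsSFTDeg {G : Type*} [Group G] {k : ℕ} (σ : Fin k → G) (P : Set (ℕ → ℕ)) : Prop :=
  ∃ (n : ℕ) (X : Set (G → Fin n)), IsSFT X ∧ X.Nonempty ∧
    BaireEquiv (mSet (pullback (cover σ) X)) P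

/-- The Medvedev degree of `P` belongs to `M_sof(G)`. -/
def IsSoficDeg {G : Type*} [Group G] {k : ℕ} (σ : Fin k → G) (P : Set (ℕ → ℕ)) : Prop :=
  ∃ (n : ℕ) (X : Set (G → Fin n)), IsSofic X ∧ X.Nonempty ∧
    BaireEquiv (mSet (pullback (cover σ) X)) P

/-- The Medvedev degree of `P` belongs to `M_eff(G)`. -/
def IsEffDeg {G : Type*} [Group G] {k : ℕ} (σ : Fin k → G) (P : Set (ℕ → ℕ)) : Prop :=
  ∃ (n : ℕ) (X : Set (G → Fin n)), IsSubshift X ∧ IsEffective σ X ∧ X.Nonempty ∧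
    BaireEquiv (mSet (pullback (cover σ) X)) P

/-! ### Word metrics and quasi-isometries -/

/-- The word length of `g` w.r.t. the (symmetric) generating map `σ`. -/
noncomputable def wordNorm {G : Type*} [Group G] {k : ℕ} (σ : Fin k → G) (g : G) : ℕ :=
  sInf {n | ∃ w : List (Fin k), w.length = n ∧ (w.map σ).prod = g}

/-- The word metric on `G` w.r.t. `σ`, as a real number. -/
noncomputable def wordDist {G : Type*} [Group G] {k : ℕ} (σ : Fin k → G) (g g' : G) : ℝ :=
  (wordNorm σ (g⁻¹ * g') : ℝ)

/-- `f : G → H` is a quasi-isometry w.r.t. the word metrics given by `σ` and `τ`. -/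
def IsQIGroups {G H : Type*} [Group G] [Group H] {k r : ℕ} (σ : Fin k → G)
    (τ : Fin r → H) (f : G → H) : Prop :=
  ∃ C : ℝ, 1 ≤ C ∧
    (∀ g g' : G, (1 / C) * wordDist σ g g' - C ≤ wordDist τ (f g) (f g') ∧
      wordDist τ (f g) (f g') ≤ C * wordDist σ g g' + C) ∧
    ∀ h : H, ∃ g : G, wordDist τ h (f g) ≤ C

/-- `f : G → Y` is a quasi-isometry from the group `G` (with word metric from `σ`) to the
metric space `Y`. -/
def IsQIToSpace {G : Type*} [Group G] {k : ℕ} (σ : Fin k → G) {Y : Type*}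
    [MetricSpace Y] (f : G → Y) : Prop :=
  ∃ C : ℝ, 1 ≤ C ∧
    (∀ g g' : G, (1 / C) * wordDist σ g g' - C ≤ dist (f g) (f g') ∧
      dist (f g) (f g') ≤ C * wordDist σ g g' + C) ∧
    ∀ y : Y, ∃ g : G, dist y (f g) ≤ C

/-- `f : G → H` is computable w.r.t. the generating maps `σ` and `τ`: some computable map
on words sends each word representing `g` to a word representing `f g`. -/
def ComputableMap {G H : Type*} [Group G] [Group H] {k r : ℕ} (σ : Fin k → G)
    (τ : Fin r → H) (f : G → H) : Prop :=
  ∃ φ : List (Fin k × Bool) → List (Fin r × Bool), Computable φ ∧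
    ∀ w : List (Fin k × Bool), wordVal τ (φ w) = f (wordVal σ w)

/-- The `G`-SFT described by an input to the domino problem is nonempty. An input
consists of an alphabet size `n` and a finite list of pattern codings, each coding being
a finite list of pairs (word over the generators, letter `< n`). -/
def codingSFTNonempty {G : Type*} [Group G] {k : ℕ} (σ : Fin k → G)
    (input : ℕ × List (List (List (Fin k × Bool) × ℕ))) : Prop :=
  ∃ x : G → ℕ, (∀ g : G, x g < input.1) ∧
    ∀ c ∈ input.2, ∀ g : G, ¬∀ p ∈ c, x (g * wordVal σ p.1) = p.2

section DominoAux
open Encodable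

def codingOf (k : ℕ) (v : List ℕ) : List (List (Fin k × Bool) × ℕ) :=
  (List.range v.length).filterMap fun j =>
    (decode (α := List (Fin k × Bool)) j).map fun l => (l, v.getD j 0)

def cEnum (k : ℕ) (i : ℕ) : List (List (Fin k × Bool) × ℕ) :=
  codingOf k ((decode (α := List ℕ) i).getD [])

variable {k : ℕ} (φ : ℕ × List (List (List (Fin k × Bool) × ℕ)) → Bool) (n : ℕ)
  (C0 : List (List (List (Fin k × Bool) × ℕ)))

def Dchain : ℕ → List (List (List (Fin k × Bool) × ℕ))
  | 0 => C0
  | i + 1 => Dchain i ++ (bif φ (n, Dchain i ++ [cEnum k i]) then [cEnum k i] else [])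

def testA (v : List ℕ) : Bool := !(φ (n, Dchain φ n C0 (encode v) ++ [codingOf k v]))

def pickF (v : List ℕ) : ℕ → ℕ
  | 0 => 0
  | j + 1 => bif testA φ n C0 (v ++ [j]) then j else pickF v j

def Vchain : ℕ → List ℕ
  | 0 => []
  | m + 1 => Vchain m ++ [pickF φ n C0 (Vchain m) n]

def outFun (m : ℕ) : ℕ :=
  if (decode (α := List (Fin k × Bool)) m).isSome
  then (Vchain φ n C0 (m + 1)).getD m 0 + 1 else 0

theorem codingOf_primrec : Primrec (codingOf k) := by
  have h1 : Primrec fun v : List ℕ => List.range v.length :=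
    Primrec.list_range.comp Primrec.list_length
  have hget : Primrec fun q : (List ℕ × ℕ) × List (Fin k × Bool) => q.1.1.getD q.1.2 0 :=
    Primrec₂.comp (f := fun (l : List ℕ) (j : ℕ) => l.getD j 0) (Primrec.list_getD 0) (Primrec.fst.comp Primrec.fst) (Primrec.snd.comp Primrec.fst)
  have h2 : Primrec₂ fun (v : List ℕ) (j : ℕ) =>
      (decode (α := List (Fin k × Bool)) j).map fun l => (l, v.getD j 0) :=
    Primrec.option_map (Primrec.comp Primrec.decode Primrec.snd) (Primrec.pair Primrec.snd hget)
  exact Primrec.listFilterMap h1 h2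

theorem cEnum_primrec : Primrec (cEnum k) :=
  codingOf_primrec.comp (Primrec₂.comp Primrec.option_getD Primrec.decode (Primrec.const []))


theorem dchain_computable (hφ : Computable φ) : Computable (Dchain φ n C0) := by
  have cE : Computable fun p : ℕ × List (List (List (Fin k × Bool) × ℕ)) => cEnum k p.1 :=
    cEnum_primrec.to_comp.comp Computable.fst
  have hDc : Computable fun p : ℕ × List (List (List (Fin k × Bool) × ℕ)) =>
      p.2 ++ [cEnum k p.1] :=
    Computable.list_concat.comp Computable.snd cE
  have hcond : Computable fun p : ℕ × List (List (List (Fin k × Bool) × ℕ)) =>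
      (bif φ (n, p.2 ++ [cEnum k p.1]) then [cEnum k p.1] else []) :=
    Computable.cond (hφ.comp ((Computable.const n).pair hDc))
      (Computable.list_cons.comp cE (Computable.const [])) (Computable.const [])
  have hstep : Computable fun p : ℕ × List (List (List (Fin k × Bool) × ℕ)) =>
      p.2 ++ (bif φ (n, p.2 ++ [cEnum k p.1]) then [cEnum k p.1] else []) :=
    Computable.list_append.comp Computable.snd hcond
  have := Computable.nat_rec (f := fun i : ℕ => i) (g := fun _ : ℕ => C0)
    (h := fun (_ : ℕ) (p : ℕ × List (List (List (Fin k × Bool) × ℕ))) =>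
      p.2 ++ (bif φ (n, p.2 ++ [cEnum k p.1]) then [cEnum k p.1] else []))
    Computable.id (Computable.const C0) (hstep.comp Computable.snd).to₂
  exact this.of_eq fun i => by
    induction i with
    | zero => rfl
    | succ j ih => simp only [Dchain, ← ih]

theorem testA_computable (hφ : Computable φ) : Computable (testA φ n C0) := by
  have h1 : Computable fun v : List ℕ => Dchain φ n C0 (encode v) :=
    (dchain_computable φ n C0 hφ).comp Computable.encode
  have h2 : Computable fun v : List ℕ => Dchain φ n C0 (encode v) ++ [codingOf k v] :=
    Computable.list_concat.comp h1 codingOf_primrec.to_comp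
  exact (Primrec.not.to_comp).comp (hφ.comp ((Computable.const n).pair h2))

theorem pickF_computable (hφ : Computable φ) : Computable fun v => pickF φ n C0 v n := by
  have hstep : Computable fun p : List ℕ × (ℕ × ℕ) =>
      (bif testA φ n C0 (p.1 ++ [p.2.1]) then p.2.1 else p.2.2) :=
    Computable.cond ((testA_computable φ n C0 hφ).comp
        (Computable.list_concat.comp Computable.fst (Computable.fst.comp Computable.snd)))
      (Computable.fst.comp Computable.snd) (Computable.snd.comp Computable.snd)
  have := Computable.nat_rec (f := fun _ : List ℕ => n) (g := fun _ : List ℕ => 0)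
    (h := fun (v : List ℕ) (p : ℕ × ℕ) => (bif testA φ n C0 (v ++ [p.1]) then p.1 else p.2))
    (Computable.const n) (Computable.const 0) hstep.to₂
  have key : ∀ (v : List ℕ) (N : ℕ),
      (Nat.rec (motive := fun _ => ℕ) 0
        (fun y IH => bif testA φ n C0 (v ++ [y]) then y else IH) N) = pickF φ n C0 v N := by
    intro v N
    induction N with
    | zero => rfl
    | succ j ih => simp only [pickF, ← ih]
  exact this.of_eq fun v => key v n

theorem vchain_computable (hφ : Computable φ) : Computable (Vchain φ n C0) := by
  have hstep : Computable fun p : ℕ × List ℕ => p.2 ++ [pickF φ n C0 p.2 n] :=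
    Computable.list_concat.comp Computable.snd
      ((pickF_computable φ n C0 hφ).comp Computable.snd)
  have := Computable.nat_rec (f := fun i : ℕ => i) (g := fun _ : ℕ => ([] : List ℕ))
    (h := fun (_ : ℕ) (p : ℕ × List ℕ) => p.2 ++ [pickF φ n C0 p.2 n])
    Computable.id (Computable.const []) (hstep.comp Computable.snd).to₂
  exact this.of_eq fun m => by
    induction m with
    | zero => rfl
    | succ j ih => simp only [Vchain, ← ih]

theorem outFun_computable (hφ : Computable φ) : Computable (outFun φ n C0) := by
  have h1 : Computable fun m : ℕ => (Vchain φ n C0 (m + 1)).getD m 0 + 1 :=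
    Computable.succ.comp ((Primrec.list_getD 0).to_comp.comp
      ((vchain_computable φ n C0 hφ).comp Computable.succ) Computable.id)
  have hc : Computable fun m : ℕ => (decode (α := List (Fin k × Bool)) m).isSome :=
    (Primrec.option_isSome.comp Primrec.decode).to_comp
  have := Computable.cond hc h1 (Computable.const 0)
  exact this.of_eq fun m => by
    unfold outFun
    cases (decode (α := List (Fin k × Bool)) m).isSome <;> simp



theorem codingOf_nil (k : ℕ) : codingOf k [] = [] := rfl

theorem codingOf_snoc (k : ℕ) (v : List ℕ) (a : ℕ) :
    codingOf k (v ++ [a]) = codingOf k v ++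
      ((decode (α := List (Fin k × Bool)) v.length).map fun l => (l, a)).toList := by
  unfold codingOf
  have hlen : (v ++ [a]).length = v.length + 1 := by simp
  rw [hlen, List.range_succ, List.filterMap_append]
  congr 1
  · apply List.filterMap_congr
    intro j hj
    have hj' : j < v.length := List.mem_range.1 hj
    rw [List.getD_append _ _ _ _ hj']
  · have hgd : (v ++ [a]).getD v.length 0 = a := by
      rw [List.getD_append_right _ _ _ _ le_rfl]
      simp
    cases hd : decode (α := List (Fin k × Bool)) v.length <;>
      simp [List.filterMap, hd, hgd]

theorem mem_codingOf {k : ℕ} {v : List ℕ} {m : ℕ} {l : List (Fin k × Bool)}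
    (hm : m < v.length) (hd : decode (α := List (Fin k × Bool)) m = some l) :
    (l, v.getD m 0) ∈ codingOf k v :=
  List.mem_filterMap.2 ⟨m, List.mem_range.2 hm, by rw [hd]; rfl⟩

theorem codingOf_subset_snoc (k : ℕ) (v : List ℕ) (a : ℕ) {q}
    (hq : q ∈ codingOf k v) : q ∈ codingOf k (v ++ [a]) := by
  rw [codingOf_snoc]
  exact List.mem_append_left _ hq

end DominoAux

section DominoMath
open Encodable

variable {G : Type*} [Group G] {k : ℕ} (σ : Fin k → G)

/-- The set of configurations avoiding a list of pattern codings. -/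
def sftSet (n : ℕ) (D : List (List (List (Fin k × Bool) × ℕ))) : Set (G → Fin n) :=
  {x | ∀ c ∈ D, ∀ g : G, ¬ ∀ p ∈ c, (x (g * wordVal σ p.1)).val = p.2}

theorem sftSet_nonempty_iff {n : ℕ} (D : List (List (List (Fin k × Bool) × ℕ))) :
    codingSFTNonempty σ (n, D) ↔ (sftSet σ n D).Nonempty := by
  constructor
  · rintro ⟨x, hb, hav⟩
    exact ⟨fun g => ⟨x g, hb g⟩, fun c hc g hall => hav c hc g hall⟩
  · rintro ⟨x, hx⟩
    exact ⟨fun g => (x g).val, fun g => (x g).isLt, fun c hc g hall => hx c hc g hall⟩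

theorem sftSet_shift {n : ℕ} {D : List (List (List (Fin k × Bool) × ℕ))} {x : G → Fin n}
    (hx : x ∈ sftSet σ n D) (g₀ : G) : shift g₀ x ∈ sftSet σ n D := by
  intro c hc g hall
  refine hx c hc (g₀⁻¹ * g) ?_
  intro p hp
  have := hall p hp
  simpa [shift, mul_assoc] using this

theorem sftSet_append_subset {n : ℕ} (D D' : List (List (List (Fin k × Bool) × ℕ))) :
    sftSet σ n (D ++ D') ⊆ sftSet σ n D :=
  fun _ hx c hc => hx c (List.mem_append_left _ hc)

theorem matchesSet_isClosed (n : ℕ) (c : List (List (Fin k × Bool) × ℕ)) :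
    @IsClosed (G → Fin n) (prodiscrete G (Fin n))
      {x | ∀ q ∈ c, (x (wordVal σ q.1)).val = q.2} := by
  letI : TopologicalSpace (Fin n) := ⊥
  haveI : DiscreteTopology (Fin n) := ⟨rfl⟩
  show @IsClosed (G → Fin n) Pi.topologicalSpace _
  have : {x : G → Fin n | ∀ q ∈ c, (x (wordVal σ q.1)).val = q.2}
      = ⋂ (q : List (Fin k × Bool) × ℕ) (_ : q ∈ c),
          (fun x : G → Fin n => x (wordVal σ q.1)) ⁻¹' {b | b.val = q.2} := by
    ext x
    simp only [Set.mem_setOf_eq, Set.mem_iInter, Set.mem_preimage]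
  rw [this]
  exact isClosed_iInter fun q => isClosed_iInter fun _ =>
    IsClosed.preimage (continuous_apply _) (isClosed_discrete _)

theorem matchesSet_isOpen (n : ℕ) (c : List (List (Fin k × Bool) × ℕ)) (g : G) :
    @IsOpen (G → Fin n) (prodiscrete G (Fin n))
      {x | ∀ q ∈ c, (x (g * wordVal σ q.1)).val = q.2} := by
  letI : TopologicalSpace (Fin n) := ⊥
  haveI : DiscreteTopology (Fin n) := ⟨rfl⟩
  show @IsOpen (G → Fin n) Pi.topologicalSpace _
  have : {x : G → Fin n | ∀ q ∈ c, (x (g * wordVal σ q.1)).val = q.2}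
      = ⋂ q ∈ {q | q ∈ c},
          (fun x : G → Fin n => x (g * wordVal σ q.1)) ⁻¹' {b | b.val = q.2} := by
    ext x
    simp only [Set.mem_setOf_eq, Set.mem_iInter, Set.mem_preimage]
  rw [this]
  refine Set.Finite.isOpen_biInter (List.finite_toSet c) fun q _ => ?_
  exact IsOpen.preimage (continuous_apply _) (isOpen_discrete _)

theorem sftSet_isClosed (n : ℕ) (D : List (List (List (Fin k × Bool) × ℕ))) :
    @IsClosed (G → Fin n) (prodiscrete G (Fin n)) (sftSet σ n D) := by
  have : sftSet σ n D = ⋂ (c : List (List (Fin k × Bool) × ℕ)) (_ : c ∈ D) (g : G),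
      {x : G → Fin n | ∀ q ∈ c, (x (g * wordVal σ q.1)).val = q.2}ᶜ := by
    ext x
    simp only [sftSet, Set.mem_setOf_eq, Set.mem_iInter, Set.mem_compl_iff]
  rw [this]
  letI : TopologicalSpace (Fin n) := ⊥
  exact isClosed_iInter fun c => isClosed_iInter fun _ => isClosed_iInter fun g =>
    IsOpen.isClosed_compl (matchesSet_isOpen σ n c g)

theorem exists_coding (hσ : IsSymmGen σ) {n : ℕ} {X : Set (G → Fin n)} (hX : IsSFT X) :
    ∃ C0, sftSet σ n C0 = X := by
  have hsurj : ∀ g : G, ∃ w : List (Fin k × Bool), wordVal σ w = g := by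
    intro g
    have hr : (cover σ).range = ⊤ := by
      rw [cover, FreeGroup.range_lift_eq_closure]
      exact hσ.1
    have : g ∈ (cover σ).range := by rw [hr]; trivial
    obtain ⟨u, hu⟩ := this
    exact ⟨u.toWord, by simpa [wordVal, FreeGroup.mk_toWord] using hu⟩
  choose wd hwd using hsurj
  obtain ⟨F, hF⟩ := hX
  refine ⟨F.map (fun p => p.dom.attach.toList.map fun h => (wd h.1, (p.val h).val)), ?_⟩
  rw [hF]; ext x
  simp only [sftSet, Set.mem_setOf_eq, List.mem_map]
  constructor
  · rintro H p hp g hm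
    refine H _ ⟨p, hp, rfl⟩ g⁻¹ ?_
    intro q hq
    obtain ⟨h, _, rfl⟩ := List.mem_map.1 hq
    rw [hwd]
    have := hm h
    simp only [shift] at this
    rw [this]
  · rintro H c ⟨p, hp, rfl⟩ g hall
    refine H p hp g⁻¹ ?_
    intro h
    have hmem : (wd h.1, (p.val h).val) ∈
        p.dom.attach.toList.map fun h => (wd h.1, (p.val h).val) :=
      List.mem_map.2 ⟨h, by simp, rfl⟩
    have := hall _ hmem
    rw [hwd] at this
    show x (g⁻¹⁻¹ * h.1) = p.val h
    rw [inv_inv]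
    exact Fin.val_injective this

end DominoMath

/-- If a finitely generated group `G` admits a nonempty SFT with nonzero Medvedev degree,
then the domino problem of `G` is undecidable: no computable function decides, given a
finite set of pattern codings, whether the `G`-SFT they define is nonempty. -/
theorem statement18 {G : Type*} [Group G] {k : ℕ} (σ : Fin k → G) (hσ : IsSymmGen σ)
    (hX : ∃ (n : ℕ) (X : Set (G → Fin n)), IsSFT X ∧ X.Nonempty ∧
      ∀ y ∈ mSet (pullback (cover σ) X), ¬Computable y) :
    ¬∃ φ : ℕ × List (List (List (Fin k × Bool) × ℕ)) → Bool, Computable φ ∧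
      ∀ input, (φ input = true ↔ codingSFTNonempty σ input) := by
  classical
  rintro ⟨φ, hφ, hcorr⟩
  obtain ⟨n, X, hSFT, hne, hnc⟩ := hX
  obtain ⟨x0, hx0⟩ := hne
  have hn : 0 < n := Nat.pos_of_ne_zero (fun h => by subst h; exact (x0 1).elim0)
  obtain ⟨C0, hC0⟩ := exists_coding σ hσ hSFT
  -- topology
  letI : TopologicalSpace (Fin n) := ⊥
  haveI : DiscreteTopology (Fin n) := ⟨rfl⟩
  letI tG : TopologicalSpace (G → Fin n) := prodiscrete G (Fin n)
  haveI : CompactSpace (G → Fin n) := Pi.compactSpace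
  set S : ℕ → Set (G → Fin n) := fun i => sftSet σ n (Dchain φ n C0 i) with hS
  have hclosed : ∀ i, IsClosed (S i) := fun i => sftSet_isClosed σ n (Dchain φ n C0 i)
  have hSdec : ∀ i, S (i + 1) ⊆ S i := fun i =>
    sftSet_append_subset σ _ _
  have hSne : ∀ i, (S i).Nonempty := by
    intro i
    induction i with
    | zero =>
      show (sftSet σ n C0).Nonempty
      rw [hC0]; exact ⟨x0, hx0⟩
    | succ i ih =>
      cases hb : φ (n, Dchain φ n C0 i ++ [cEnum k i]) with
      | false =>
        have hDeq : Dchain φ n C0 (i + 1) = Dchain φ n C0 i := by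
          simp [Dchain, hb]
        show (sftSet σ n (Dchain φ n C0 (i + 1))).Nonempty
        rw [hDeq]; exact ih
      | true =>
        have hco : codingSFTNonempty σ (n, Dchain φ n C0 i ++ [cEnum k i]) := (hcorr _).1 hb
        have hne' := (sftSet_nonempty_iff σ _).1 hco
        have hDeq : Dchain φ n C0 (i + 1) = Dchain φ n C0 i ++ [cEnum k i] := by
          simp [Dchain, hb]
        show (sftSet σ n (Dchain φ n C0 (i + 1))).Nonempty
        rw [hDeq]; exact hne'
  set Z : Set (G → Fin n) := ⋂ i, S i with hZ
  have hZne : Z.Nonempty :=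
    IsCompact.nonempty_iInter_of_sequence_nonempty_isCompact_isClosed S hSdec hSne
      ((hclosed 0).isCompact) hclosed
  have hZsub : ∀ i, Z ⊆ S i := fun i => Set.iInter_subset S i
  have hZshift : ∀ x ∈ Z, ∀ g : G, shift g x ∈ Z := fun x hx g =>
    Set.mem_iInter.2 fun i => sftSet_shift σ (Set.mem_iInter.1 hx i) g
  set M : List ℕ → Set (G → Fin n) :=
    fun v => {x | ∀ q ∈ codingOf k v, (x (wordVal σ q.1)).val = q.2} with hM
  -- key appearance lemma
  have hA : ∀ v : List ℕ, testA φ n C0 v = true ↔ ∃ x ∈ Z, x ∈ M v := by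
    intro v
    have hcv : cEnum k (Encodable.encode v) = codingOf k v := by
      simp [cEnum, Encodable.encodek]
    constructor
    · intro ht
      have hφf : φ (n, Dchain φ n C0 (Encodable.encode v) ++ [codingOf k v]) = false := by
        have h1 := ht
        rwa [testA, Bool.not_eq_true'] at h1
      have hempty : ¬ (sftSet σ n (Dchain φ n C0 (Encodable.encode v) ++ [codingOf k v])).Nonempty := by
        intro hne'
        have h1 := (sftSet_nonempty_iff σ _).2 hne'
        have h2 := (hcorr _).2 h1
        rw [hφf] at h2
        exact Bool.false_ne_true h2
      obtain ⟨x, hxZ⟩ := hZne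
      have hxS : x ∈ S (Encodable.encode v) := hZsub _ hxZ
      have hxnot : x ∉ sftSet σ n (Dchain φ n C0 (Encodable.encode v) ++ [codingOf k v]) :=
        fun h => hempty ⟨x, h⟩
      rw [sftSet, Set.mem_setOf_eq] at hxnot
      push_neg at hxnot
      obtain ⟨c, hc, g, hg⟩ := hxnot
      rcases List.mem_append.1 hc with hc' | hc'
      · exact absurd hg (hxS c hc' g)
      · have hceq : c = codingOf k v := by simpa using hc'
        subst hceq
        refine ⟨shift g⁻¹ x, hZshift x hxZ g⁻¹, ?_⟩
        intro q hq
        have := hg q hq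
        simpa [shift] using this
    · rintro ⟨x, hxZ, hxM⟩
      by_contra hfalse
      have hφt : φ (n, Dchain φ n C0 (Encodable.encode v) ++ [codingOf k v]) = true := by
        have h1 : testA φ n C0 v = false := Bool.eq_false_iff.mpr hfalse
        rwa [testA, Bool.not_eq_false'] at h1
      have hDeq : Dchain φ n C0 (Encodable.encode v + 1)
          = Dchain φ n C0 (Encodable.encode v) ++ [cEnum k (Encodable.encode v)] := by
        simp [Dchain, hcv, hφt]
      have hxS : x ∈ S (Encodable.encode v + 1) := hZsub _ hxZ
      have hmem : codingOf k v ∈ Dchain φ n C0 (Encodable.encode v + 1) := by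
        rw [hDeq, hcv]
        exact List.mem_append_right _ (by simp)
      refine hxS (codingOf k v) hmem 1 ?_
      intro q hq
      rw [one_mul]
      exact hxM q hq
  -- pick specification
  have hpick : ∀ v : List ℕ, (∃ a, a < n ∧ testA φ n C0 (v ++ [a]) = true) →
      pickF φ n C0 v n < n ∧ testA φ n C0 (v ++ [pickF φ n C0 v n]) = true := by
    intro v
    suffices h : ∀ N, (∃ a, a < N ∧ testA φ n C0 (v ++ [a]) = true) →
        pickF φ n C0 v N < N ∧ testA φ n C0 (v ++ [pickF φ n C0 v N]) = true from h n
    intro N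
    induction N with
    | zero => rintro ⟨a, ha, -⟩; exact absurd ha (Nat.not_lt_zero a)
    | succ j ih =>
      rintro ⟨a, ha, hta⟩
      by_cases hj : testA φ n C0 (v ++ [j]) = true
      · have hpf : pickF φ n C0 v (j + 1) = j := by simp [pickF, hj]
        rw [hpf]
        exact ⟨Nat.lt_succ_self j, hj⟩
      · have ha' : a < j := by
          rcases Nat.lt_succ_iff_lt_or_eq.1 ha with h | h
          · exact h
          · subst h; exact absurd hta hj
        obtain ⟨h1, h2⟩ := ih ⟨a, ha', hta⟩
        have hpf : pickF φ n C0 v (j + 1) = pickF φ n C0 v j := by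
          simp [pickF, Bool.eq_false_iff.mpr hj]
        rw [hpf]
        exact ⟨Nat.lt_succ_of_lt h1, h2⟩
  have hlen : ∀ m, (Vchain φ n C0 m).length = m := by
    intro m
    induction m with
    | zero => rfl
    | succ m ih => simp [Vchain, ih]
  -- invariant
  have hinv : ∀ m, ∃ x ∈ Z, x ∈ M (Vchain φ n C0 m) := by
    intro m
    induction m with
    | zero =>
      obtain ⟨x, hx⟩ := hZne
      refine ⟨x, hx, ?_⟩
      intro q hq
      have h0 : Vchain φ n C0 0 = [] := rfl
      rw [h0, codingOf_nil] at hq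
      exact absurd hq (List.not_mem_nil (a := q))
    | succ m ih =>
      obtain ⟨x, hxZ, hxM⟩ := ih
      have hex : ∃ a, a < n ∧ testA φ n C0 (Vchain φ n C0 m ++ [a]) = true := by
        cases hd : Encodable.decode (α := List (Fin k × Bool)) m with
        | none =>
          refine ⟨0, hn, (hA _).2 ⟨x, hxZ, ?_⟩⟩
          intro q hq
          rw [codingOf_snoc, hlen m, hd] at hq
          rcases List.mem_append.1 hq with hq | hq
          · exact hxM q hq
          · simp at hq
        | some l =>
          refine ⟨(x (wordVal σ l)).val, (x (wordVal σ l)).isLt, (hA _).2 ⟨x, hxZ, ?_⟩⟩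
          intro q hq
          rw [codingOf_snoc, hlen m, hd] at hq
          rcases List.mem_append.1 hq with hq | hq
          · exact hxM q hq
          · have hq' : q = (l, (x (wordVal σ l)).val) := by simpa using hq
            rw [hq']
      obtain ⟨-, ht⟩ := hpick _ hex
      obtain ⟨y, hyZ, hyM⟩ := (hA _).1 ht
      exact ⟨y, hyZ, hyM⟩
  -- limit point
  have hMclosed : ∀ v, IsClosed (M v) := fun v => matchesSet_isClosed σ n (codingOf k v)
  have hZclosed : IsClosed Z := isClosed_iInter hclosed
  have hTclosed : ∀ m, IsClosed (Z ∩ M (Vchain φ n C0 m)) :=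
    fun m => hZclosed.inter (hMclosed _)
  have hTne : ∀ m, (Z ∩ M (Vchain φ n C0 m)).Nonempty := by
    intro m
    obtain ⟨x, h1, h2⟩ := hinv m
    exact ⟨x, h1, h2⟩
  have hTdec : ∀ m, Z ∩ M (Vchain φ n C0 (m + 1)) ⊆ Z ∩ M (Vchain φ n C0 m) := by
    intro m x hx
    refine ⟨hx.1, ?_⟩
    intro q hq
    exact hx.2 q (codingOf_subset_snoc k _ _ hq)
  obtain ⟨xf, hxf⟩ :=
    IsCompact.nonempty_iInter_of_sequence_nonempty_isCompact_isClosed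
      (fun m => Z ∩ M (Vchain φ n C0 m)) hTdec hTne ((hTclosed 0).isCompact) hTclosed
  have hxfZ : xf ∈ Z := (Set.mem_iInter.1 hxf 0).1
  have hxfX : xf ∈ X := by
    have := hZsub 0 hxfZ
    show xf ∈ X
    rw [← hC0]
    exact this
  -- value identification
  have hval : ∀ m l, Encodable.decode (α := List (Fin k × Bool)) m = some l →
      (xf (wordVal σ l)).val = (Vchain φ n C0 (m + 1)).getD m 0 := by
    intro m l hd
    have hxM : xf ∈ M (Vchain φ n C0 (m + 1)) := (Set.mem_iInter.1 hxf (m + 1)).2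
    exact hxM _ (mem_codingOf (by rw [hlen]; exact Nat.lt_succ_self m) hd)
  -- the computable point
  have hmem : confFun (xf ∘ (cover σ)) ∈ mSet (pullback (cover σ) X) :=
    ⟨xf ∘ (cover σ), ⟨xf, hxfX, rfl⟩, rfl⟩
  refine hnc _ hmem ?_
  have heq : confFun (xf ∘ (cover σ)) = outFun φ n C0 := by
    funext m
    have hdec : (Encodable.decode (α := FreeGroup (Fin k)) m)
        = (Encodable.decode (α := List (Fin k × Bool)) m).bind (fun l => some (FreeGroup.mk l)) := rfl
    show Encodable.encode ((Encodable.decode (α := FreeGroup (Fin k)) m).map (xf ∘ (cover σ))) = _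
    rw [hdec]
    cases hd : Encodable.decode (α := List (Fin k × Bool)) m with
    | none => simp [outFun, hd]
    | some l =>
      show Encodable.encode (some ((xf ∘ ⇑(cover σ)) (FreeGroup.mk l))) = outFun φ n C0 m
      have h2 : Encodable.encode (some ((xf ∘ ⇑(cover σ)) (FreeGroup.mk l)))
          = ((xf ∘ ⇑(cover σ)) (FreeGroup.mk l)).val + 1 := rfl
      have h3 : (xf ∘ ⇑(cover σ)) (FreeGroup.mk l) = xf (wordVal σ l) := rfl
      have h4 : outFun φ n C0 m = (Vchain φ n C0 (m + 1)).getD m 0 + 1 := by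
        simp [outFun, hd]
      rw [h2, h3, hval m l hd, h4]
  rw [heq]
  exact outFun_computable φ n C0 hφ

end MedvedevFormal
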